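/- Let α = 1 + √2. If Σ_{i=0}^{n} xᵢ·α^{3i} = Σ_{i=0}^{m} yᵢ·α^{3i} with all xᵢ, yᵢ ∈ {0,1,...,5}, xₙ ≠ 0 and yₘ ≠ 0, then n = m and xᵢ = yᵢ for all 0 ≤ i ≤ n. -/

import Mathlib

open Finset

private lemma beta_ge : (6:ℝ) ≤ (1 + Real.sqrt 2) ^ 3 := by
  have h : (1:ℝ) ≤ Real.sqrt 2 := by
    rw [show (1:ℝ) = Real.sqrt 1 by simp]
    exact Real.sqrt_le_sqrt (by norm_num)
  nlinarith [h, Real.sq_sqrt (show (0:ℝ) ≤ 2 by norm_num)]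

private lemma sum_lt_pow (b : ℝ) (hb : 6 ≤ b) (k : ℕ) (d : ℕ → ℕ)
    (hd : ∀ i < k, d i ≤ 5) :
    ∑ i ∈ range k, (d i : ℝ) * b ^ i < b ^ k := by
  induction k with
  | zero => simp
  | succ k ih =>
    rw [sum_range_succ, pow_succ]
    have h1 := ih (fun i hi => hd i (hi.trans (Nat.lt_succ_self k)))
    have h2 : (d k : ℝ) ≤ 5 := by exact_mod_cast hd k (Nat.lt_succ_self k)
    have hbk : (0:ℝ) < b ^ k := pow_pos (by linarith) k
    nlinarith

private lemma digits_unique (b : ℝ) (hb : 6 ≤ b) :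
    ∀ k (d e : ℕ → ℕ), (∀ i < k, d i ≤ 5) → (∀ i < k, e i ≤ 5) →
    (∑ i ∈ range k, (d i : ℝ) * b ^ i = ∑ i ∈ range k, (e i : ℝ) * b ^ i) →
    ∀ i < k, d i = e i := by
  intro k
  induction k with
  | zero => intro d e _ _ _ i hi; omega
  | succ k ih =>
    intro d e hd he heq i hi
    have hd' : ∀ i < k, d i ≤ 5 := fun i hi => hd i (hi.trans (Nat.lt_succ_self k))
    have he' : ∀ i < k, e i ≤ 5 := fun i hi => he i (hi.trans (Nat.lt_succ_self k))
    rw [sum_range_succ, sum_range_succ] at heq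
    have hA := sum_lt_pow b hb k d hd'
    have hB := sum_lt_pow b hb k e he'
    have hA0 : (0:ℝ) ≤ ∑ i ∈ range k, (d i : ℝ) * b ^ i :=
      sum_nonneg fun i _ => mul_nonneg (Nat.cast_nonneg _) (pow_nonneg (by linarith) _)
    have hB0 : (0:ℝ) ≤ ∑ i ∈ range k, (e i : ℝ) * b ^ i :=
      sum_nonneg fun i _ => mul_nonneg (Nat.cast_nonneg _) (pow_nonneg (by linarith) _)
    have hbk : (0:ℝ) < b ^ k := pow_pos (by linarith) k
    have htop : d k = e k := by
      by_contra hne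
      rcases Nat.lt_or_ge (d k) (e k) with h | h
      · have h1 : (d k : ℝ) + 1 ≤ e k := by exact_mod_cast h
        nlinarith
      · have h' : e k < d k := lt_of_le_of_ne h (Ne.symm hne)
        have h1 : (e k : ℝ) + 1 ≤ d k := by exact_mod_cast h'
        nlinarith
    have hcast : (d k : ℝ) = e k := by exact_mod_cast htop
    rw [hcast] at heq
    have heq' : ∑ i ∈ range k, (d i : ℝ) * b ^ i = ∑ i ∈ range k, (e i : ℝ) * b ^ i := by
      linarith
    rcases Nat.lt_succ_iff_lt_or_eq.mp hi with h | h
    · exact ih d e hd' he' heq' i h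
    · subst h; exact htop

/-- Uniqueness of representations as sums of powers of `α = 1 + √2` at exponents
divisible by 3 with digits in `{0,…,5}`. -/
theorem alpha_representation_unique (n m : ℕ) (x y : ℕ → ℕ)
    (hx : ∀ i ≤ n, x i ≤ 5) (hy : ∀ i ≤ m, y i ≤ 5)
    (hxn : x n ≠ 0) (hym : y m ≠ 0)
    (heq : ∑ i ∈ Finset.range (n + 1), (x i : ℝ) * (1 + Real.sqrt 2) ^ (3 * i)
         = ∑ i ∈ Finset.range (m + 1), (y i : ℝ) * (1 + Real.sqrt 2) ^ (3 * i)) :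
    n = m ∧ ∀ i ≤ n, x i = y i := by
  set b : ℝ := (1 + Real.sqrt 2) ^ 3 with hbdef
  have hb : (6:ℝ) ≤ b := beta_ge
  have hb0 : (0:ℝ) < b := by linarith
  simp_rw [pow_mul] at heq
  -- heq now in terms of b ^ i
  have key : ∀ (n m : ℕ) (x y : ℕ → ℕ), (∀ i ≤ n, x i ≤ 5) → y m ≠ 0 →
      (∑ i ∈ Finset.range (n + 1), (x i : ℝ) * b ^ i
        = ∑ i ∈ Finset.range (m + 1), (y i : ℝ) * b ^ i) → ¬ (n < m) := by
    intro n m x y hx hym heq hnm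
    have hlt : ∑ i ∈ Finset.range (n + 1), (x i : ℝ) * b ^ i < b ^ (n + 1) :=
      sum_lt_pow b hb (n + 1) x (fun i hi => hx i (Nat.lt_succ_iff.mp hi))
    have h1 : b ^ (n + 1) ≤ b ^ m := pow_le_pow_right₀ (by linarith) hnm
    have h2 : b ^ m ≤ ∑ i ∈ Finset.range (m + 1), (y i : ℝ) * b ^ i := by
      rw [sum_range_succ]
      have hy1 : (1:ℝ) ≤ y m := by
        have := Nat.one_le_iff_ne_zero.mpr hym
        exact_mod_cast this
      have hbm : (0:ℝ) < b ^ m := pow_pos hb0 m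
      have h0 : (0:ℝ) ≤ ∑ i ∈ Finset.range m, (y i : ℝ) * b ^ i :=
        sum_nonneg fun i _ => mul_nonneg (Nat.cast_nonneg _) (pow_nonneg (le_of_lt hb0) _)
      nlinarith
    linarith
  have hnm : n = m := by
    rcases lt_trichotomy n m with h | h | h
    · exact absurd h (key n m x y hx hym heq)
    · exact h
    · exact absurd h (key m n y x hy hxn heq.symm)
  subst hnm
  refine ⟨rfl, fun i hi => ?_⟩
  exact digits_unique b hb (n + 1) x y (fun i hi => hx i (Nat.lt_succ_iff.mp hi))
    (fun i hi => hy i (Nat.lt_succ_iff.mp hi)) heq i (Nat.lt_succ_iff.mpr hi)
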